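/- For every integer i ≥ 1 and every k ∈ ℕ: if α_i(k) = α_i(k+1) = ⋯ = α_i(k+i+1), then β_i(k+i) < β_i(k+i+1); symmetrically, if β_i(k) = β_i(k+1) = ⋯ = β_i(k+i+1), then α_i(k+i) < α_i(k+i+1). -/
import Mathlib


/-- `α_i(k) = ⌈k/(i+1)⌉ + 1` if `(i+1) ∣ k` and `k/(i+1)` is odd, and
`α_i(k) = ⌈k/(i+1)⌉` otherwise.  (Here `(k + i) / (i + 1) = ⌈k/(i+1)⌉`.) -/
def alph (i k : ℕ) : ℕ :=
  if (i + 1) ∣ k ∧ Odd (k / (i + 1)) then (k + i) / (i + 1) + 1 else (k + i) / (i + 1)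

/-- `β_i(k) = ⌈k/(i+1)⌉ + 1` if `(i+1) ∣ k` and `k/(i+1)` is even, and
`β_i(k) = ⌈k/(i+1)⌉` otherwise. -/
def bet (i k : ℕ) : ℕ :=
  if (i + 1) ∣ k ∧ Even (k / (i + 1)) then (k + i) / (i + 1) + 1 else (k + i) / (i + 1)

lemma alph_eval (i q s : ℕ) :
    alph i ((i + 1) * q + s) =
      if (i + 1) ∣ s ∧ Odd (q + s / (i + 1)) then q + (s + i) / (i + 1) + 1
      else q + (s + i) / (i + 1) := by
  unfold alph
  rw [show (i + 1) * q + s + i = (i + 1) * q + (s + i) by ring,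
    Nat.mul_add_div (by omega), Nat.mul_add_div (by omega)]
  simp only [Nat.dvd_add_right (dvd_mul_right (i + 1) q)]

lemma bet_eval (i q s : ℕ) :
    bet i ((i + 1) * q + s) =
      if (i + 1) ∣ s ∧ Even (q + s / (i + 1)) then q + (s + i) / (i + 1) + 1
      else q + (s + i) / (i + 1) := by
  unfold bet
  rw [show (i + 1) * q + s + i = (i + 1) * q + (s + i) by ring,
    Nat.mul_add_div (by omega), Nat.mul_add_div (by omega)]
  simp only [Nat.dvd_add_right (dvd_mul_right (i + 1) q)]

/-- If `α_i(k) = α_i(k+1) = ⋯ = α_i(k+i+1)`, then `β_i(k+i) < β_i(k+i+1)`;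
symmetrically, if `β_i(k) = β_i(k+1) = ⋯ = β_i(k+i+1)`, then `α_i(k+i) < α_i(k+i+1)`. -/
theorem alph_bet_sameside (i : ℕ) (hi : 1 ≤ i) (k : ℕ) :
    ((∀ j ≤ i + 1, alph i (k + j) = alph i k) → bet i (k + i) < bet i (k + i + 1)) ∧
    ((∀ j ≤ i + 1, bet i (k + j) = bet i k) → alph i (k + i) < alph i (k + i + 1)) := by
  obtain ⟨q, r, hr, rfl⟩ : ∃ q r, r < i + 1 ∧ k = (i + 1) * q + r :=
    ⟨k / (i + 1), k % (i + 1), Nat.mod_lt _ (by omega), (Nat.div_add_mod k (i + 1)).symm⟩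
  have hdr : r / (i + 1) = 0 := Nat.div_eq_of_lt hr
  have hdri : (r + i) / (i + 1) = if r = 0 then 0 else 1 := by
    split
    · subst ‹r = 0›; simpa using Nat.div_eq_of_lt (by omega : i < i + 1)
    · rw [Nat.div_eq_sub_div (by omega) (by omega), Nat.div_eq_of_lt (by omega)]
  have hdvr : (i + 1) ∣ r ↔ r = 0 :=
    ⟨fun h => Nat.eq_zero_of_dvd_of_lt h hr, fun h => h ▸ dvd_zero _⟩
  have hdvi : ¬ (i + 1) ∣ i := fun h => by
    have := Nat.eq_zero_of_dvd_of_lt h (by omega); omega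
  have hdii : (i + i) / (i + 1) = 1 := by
    rw [Nat.div_eq_sub_div (by omega) (by omega), Nat.div_eq_of_lt (by omega)]
  constructor
  · intro H
    have h := H (i + 1) le_rfl
    rw [show (i + 1) * q + r + (i + 1) = (i + 1) * (q + 1) + r by ring, alph_eval, alph_eval,
      hdr, hdri] at h
    simp only [hdvr, add_zero, Nat.odd_iff] at h
    have hq : r = 0 ∧ q % 2 = 1 := by split_ifs at h <;> omega
    obtain ⟨rfl, hq⟩ := hq
    rw [show (i + 1) * q + 0 + i = (i + 1) * q + i by ring,
      show (i + 1) * q + i + 1 = (i + 1) * (q + 1) + 0 by ring,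
      bet_eval, bet_eval, if_neg (fun h' => hdvi h'.1),
      if_pos ⟨dvd_zero _, by rw [Nat.zero_div, add_zero, Nat.even_iff]; omega⟩,
      hdii]
    have : (0 + i) / (i + 1) = 0 := by rw [Nat.zero_add]; exact Nat.div_eq_of_lt (by omega)
    omega
  · intro H
    have h := H (i + 1) le_rfl
    rw [show (i + 1) * q + r + (i + 1) = (i + 1) * (q + 1) + r by ring, bet_eval, bet_eval,
      hdr, hdri] at h
    simp only [hdvr, add_zero, Nat.even_iff] at h
    have hq : r = 0 ∧ q % 2 = 0 := by split_ifs at h <;> omega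
    obtain ⟨rfl, hq⟩ := hq
    rw [show (i + 1) * q + 0 + i = (i + 1) * q + i by ring,
      show (i + 1) * q + i + 1 = (i + 1) * (q + 1) + 0 by ring,
      alph_eval, alph_eval, if_neg (fun h' => hdvi h'.1),
      if_pos ⟨dvd_zero _, by rw [Nat.zero_div, add_zero, Nat.odd_iff]; omega⟩,
      hdii]
    have : (0 + i) / (i + 1) = 0 := by rw [Nat.zero_add]; exact Nat.div_eq_of_lt (by omega)
    omega
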